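/- Let f(x) = Σ_{k=1}^{∞} ⌊kx⌋/2^k for 0 ≤ x < 1. Then at every rational point x = r/q in (0,1) with r, q coprime positive integers, f has a jump of size f(x+0) - f(x-0) = 1/(2^q - 1), and f is continuous at every irrational point of (0,1). -/

import Mathlib

open Filter Set

/-- The Devil's staircase function `f(x) = ∑_{k=1}^∞ ⌊kx⌋ / 2^k`
(the `k = 0` term vanishes, so we may sum over all `k : ℕ`). -/
noncomputable def devilStaircase (x : ℝ) : ℝ :=
  ∑' k : ℕ, (⌊(k : ℝ) * x⌋ : ℝ) / 2 ^ k

private lemma ds_bound_summable : Summable (fun k : ℕ => (2 * k + 1 : ℝ) / 2 ^ k) := by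
  have h1 : Summable (fun k : ℕ => (k : ℝ) * (1 / 2 : ℝ) ^ k) := by
    simpa using summable_pow_mul_geometric_of_norm_lt_one 1 (r := (1 / 2 : ℝ)) (by norm_num)
  have h2 : Summable (fun k : ℕ => ((1 / 2 : ℝ)) ^ k) :=
    summable_geometric_of_lt_one (by norm_num) (by norm_num)
  refine ((h1.mul_left 2).add h2).congr fun k => ?_
  have : ((1:ℝ)/2) ^ k = ((2:ℝ) ^ k)⁻¹ := by rw [one_div, inv_pow]
  rw [this]
  field_simp

private lemma ds_term_bound {y : ℝ} (hy : |y| ≤ 2) (k : ℕ) :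
    ‖(⌊(k : ℝ) * y⌋ : ℝ) / 2 ^ k‖ ≤ (2 * k + 1 : ℝ) / 2 ^ k := by
  have h2 : (0:ℝ) < 2 ^ k := by positivity
  rw [Real.norm_eq_abs, abs_div, abs_of_pos h2]
  have hb : |((⌊(k : ℝ) * y⌋ : ℤ) : ℝ)| ≤ 2 * k + 1 := by
    have h1 : ((⌊(k : ℝ) * y⌋ : ℤ) : ℝ) ≤ (k : ℝ) * y := Int.floor_le _
    have h2' : (k : ℝ) * y - 1 < ((⌊(k : ℝ) * y⌋ : ℤ) : ℝ) := by
      linarith [Int.sub_one_lt_floor ((k : ℝ) * y)]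
    have hky : |(k : ℝ) * y| ≤ 2 * k := by
      rw [abs_mul, abs_of_nonneg (Nat.cast_nonneg (α := ℝ) k)]
      calc (k : ℝ) * |y| ≤ (k : ℝ) * 2 := by
            exact mul_le_mul_of_nonneg_left hy (by positivity)
        _ = 2 * k := by ring
    rw [abs_le] at hky ⊢
    constructor <;> linarith [hky.1, hky.2]
  gcongr

private lemma ds_tendsto {x : ℝ} (hx : x ∈ Set.Ioo (0 : ℝ) 1) {F : Filter ℝ} (hF : F ≤ nhds x)
    (g : ℕ → ℝ) (hg : ∀ k : ℕ, Tendsto (fun y => (⌊(k : ℝ) * y⌋ : ℝ) / 2 ^ k) F (nhds (g k))) :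
    Tendsto devilStaircase F (nhds (∑' k, g k)) := by
  apply tendsto_tsum_of_dominated_convergence ds_bound_summable hg
  have hball : Metric.ball x 1 ∈ F := hF (Metric.ball_mem_nhds x one_pos)
  filter_upwards [hball] with y hy k
  have hyx : |y - x| < 1 := by simpa [Real.dist_eq] using hy
  have hy2 : |y| ≤ 2 := by
    have h1 : |x| < 1 := abs_lt.mpr ⟨by linarith [hx.1], hx.2⟩
    calc |y| = |(y - x) + x| := by ring_nf
    _ ≤ |y - x| + |x| := abs_add_le _ _
    _ ≤ 2 := by linarith
  exact ds_term_bound hy2 k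


private lemma ds_right (x : ℝ) (k : ℕ) :
    Tendsto (fun y : ℝ => (⌊(k : ℝ) * y⌋ : ℝ) / 2 ^ k) (nhdsWithin x (Set.Ioi x))
      (nhds ((⌊(k : ℝ) * x⌋ : ℝ) / 2 ^ k)) := by
  rcases Nat.eq_zero_or_pos k with rfl | hk
  · simpa using tendsto_const_nhds
  have hk' : (0 : ℝ) < k := by exact_mod_cast hk
  set m := ⌊(k : ℝ) * x⌋ with hm
  have hfl : ((m : ℝ)) ≤ (k : ℝ) * x := Int.floor_le _
  have hlt : (k : ℝ) * x < m + 1 := Int.lt_floor_add_one _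
  set ε := ((m : ℝ) + 1 - (k : ℝ) * x) / k with hε
  have hε0 : 0 < ε := div_pos (by linarith) hk'
  apply tendsto_const_nhds.congr'
  filter_upwards [Ioo_mem_nhdsGT
    (by linarith : x < x + ε)] with y hy
  have h1 : (m : ℝ) ≤ (k : ℝ) * y := by nlinarith [hy.1]
  have h2 : (k : ℝ) * y < m + 1 := by
    have : (k : ℝ) * y < k * (x + ε) := by nlinarith [hy.2]
    have hke : (k : ℝ) * ε = (m : ℝ) + 1 - k * x := by
      rw [hε]; field_simp
    nlinarith
  have : ⌊(k : ℝ) * y⌋ = m := Int.floor_eq_iff.mpr ⟨h1, h2⟩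
  simp [this]

private noncomputable def dsLeftVal (x : ℝ) (k : ℕ) : ℝ :=
  if k = 0 then 0 else ((⌈(k : ℝ) * x⌉ : ℝ) - 1) / 2 ^ k

private lemma ds_left (x : ℝ) (k : ℕ) :
    Tendsto (fun y : ℝ => (⌊(k : ℝ) * y⌋ : ℝ) / 2 ^ k) (nhdsWithin x (Set.Iio x))
      (nhds (dsLeftVal x k)) := by
  rcases Nat.eq_zero_or_pos k with rfl | hk
  · simpa [dsLeftVal] using tendsto_const_nhds
  have hk' : (0 : ℝ) < k := by exact_mod_cast hk
  set c := ⌈(k : ℝ) * x⌉ with hc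
  have hle : (k : ℝ) * x ≤ c := Int.le_ceil _
  have hgt : (c : ℝ) - 1 < (k : ℝ) * x := by linarith [Int.ceil_lt_add_one ((k : ℝ) * x)]
  set ε := ((k : ℝ) * x - ((c : ℝ) - 1)) / k with hε
  have hε0 : 0 < ε := div_pos (by linarith) hk'
  rw [show dsLeftVal x k = ((c : ℝ) - 1) / 2 ^ k by
    simp [dsLeftVal, Nat.pos_iff_ne_zero.mp hk, hc]]
  apply tendsto_const_nhds.congr'
  filter_upwards [Ioo_mem_nhdsLT
    (by linarith : x - ε < x)] with y hy
  have hke : (k : ℝ) * ε = (k : ℝ) * x - ((c : ℝ) - 1) := by rw [hε]; field_simp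
  have h1 : ((c : ℝ) - 1) ≤ (k : ℝ) * y := by nlinarith [hy.1]
  have h2 : (k : ℝ) * y < (c - 1 : ℤ) + 1 := by
    push_cast
    nlinarith [hy.2]
  have : ⌊(k : ℝ) * y⌋ = c - 1 := Int.floor_eq_iff.mpr ⟨by push_cast; linarith, h2⟩
  simp [this]

private lemma ds_nhds {x : ℝ} (hx : Irrational x) (k : ℕ) :
    Tendsto (fun y : ℝ => (⌊(k : ℝ) * y⌋ : ℝ) / 2 ^ k) (nhds x)
      (nhds ((⌊(k : ℝ) * x⌋ : ℝ) / 2 ^ k)) := by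
  rcases Nat.eq_zero_or_pos k with rfl | hk
  · simpa using tendsto_const_nhds
  have hk' : (0 : ℝ) < k := by exact_mod_cast hk
  have hirr : Irrational ((k : ℝ) * x) := hx.natCast_mul (Nat.pos_iff_ne_zero.mp hk)
  set m := ⌊(k : ℝ) * x⌋ with hm
  have hfl : ((m : ℝ)) ≤ (k : ℝ) * x := Int.floor_le _
  have hne : ((m : ℝ)) ≠ (k : ℝ) * x := fun h => (hirr ⟨(m : ℚ), by push_cast; exact h⟩)
  have hfl' : ((m : ℝ)) < (k : ℝ) * x := lt_of_le_of_ne hfl hne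
  have hlt : (k : ℝ) * x < m + 1 := Int.lt_floor_add_one _
  set ε := min (((k : ℝ) * x - m) / k) (((m : ℝ) + 1 - (k : ℝ) * x) / k) with hε
  have hε0 : 0 < ε := lt_min (div_pos (by linarith) hk') (div_pos (by linarith) hk')
  apply tendsto_const_nhds.congr'
  filter_upwards [Metric.ball_mem_nhds x hε0] with y hy
  have hyx : |y - x| < ε := by simpa [Real.dist_eq] using hy
  rw [abs_lt] at hyx
  have he1 : (k : ℝ) * ε ≤ (k : ℝ) * x - m := by
    have := min_le_left (((k : ℝ) * x - m) / k) (((m : ℝ) + 1 - (k : ℝ) * x) / k)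
    calc (k : ℝ) * ε ≤ (k : ℝ) * ((((k : ℝ) * x - m)) / k) := by
          exact mul_le_mul_of_nonneg_left this (le_of_lt hk')
      _ = (k : ℝ) * x - m := by field_simp
  have he2 : (k : ℝ) * ε ≤ (m : ℝ) + 1 - (k : ℝ) * x := by
    have := min_le_right (((k : ℝ) * x - m) / k) (((m : ℝ) + 1 - (k : ℝ) * x) / k)
    calc (k : ℝ) * ε ≤ (k : ℝ) * ((((m : ℝ) + 1 - (k : ℝ) * x)) / k) := by
          exact mul_le_mul_of_nonneg_left this (le_of_lt hk')
      _ = (m : ℝ) + 1 - (k : ℝ) * x := by field_simp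
  have h1 : (m : ℝ) ≤ (k : ℝ) * y := by nlinarith [hyx.1]
  have h2 : (k : ℝ) * y < m + 1 := by nlinarith [hyx.2]
  have : ⌊(k : ℝ) * y⌋ = m := Int.floor_eq_iff.mpr ⟨h1, h2⟩
  simp [this]

private lemma ds_summable_floor {x : ℝ} (hx : x ∈ Set.Ioo (0 : ℝ) 1) :
    Summable (fun k : ℕ => (⌊(k : ℝ) * x⌋ : ℝ) / 2 ^ k) := by
  apply ds_bound_summable.of_norm_bounded
  intro k
  exact ds_term_bound (by rw [abs_of_pos hx.1]; linarith [hx.2]) k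

private lemma ds_summable_left {x : ℝ} (hx : x ∈ Set.Ioo (0 : ℝ) 1) :
    Summable (fun k : ℕ => dsLeftVal x k) := by
  apply ds_bound_summable.of_norm_bounded
  intro k
  rcases Nat.eq_zero_or_pos k with rfl | hk
  · simp [dsLeftVal]
  have h2 : (0 : ℝ) < 2 ^ k := by positivity
  rw [dsLeftVal, if_neg (Nat.pos_iff_ne_zero.mp hk), Real.norm_eq_abs, abs_div,
    abs_of_pos h2]
  have hb : |((⌈(k : ℝ) * x⌉ : ℝ)) - 1| ≤ 2 * k + 1 := by
    have h1 : (k : ℝ) * x ≤ (⌈(k : ℝ) * x⌉ : ℝ) := Int.le_ceil _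
    have h2' : ((⌈(k : ℝ) * x⌉ : ℝ)) < (k : ℝ) * x + 1 := Int.ceil_lt_add_one _
    have hkx0 : (0 : ℝ) ≤ (k : ℝ) * x := mul_nonneg (Nat.cast_nonneg k) hx.1.le
    have hkx2 : (k : ℝ) * x ≤ k := by nlinarith [hx.2, (Nat.cast_nonneg (α := ℝ) k)]
    rw [abs_le]
    constructor <;> nlinarith [(Nat.cast_nonneg (α := ℝ) k)]
  gcongr


private lemma ds_jump_sum (q : ℕ) (hq : 0 < q) :
    HasSum (fun k : ℕ => if k ≠ 0 ∧ q ∣ k then (1 : ℝ) / 2 ^ k else 0)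
      (1 / (2 ^ q - 1)) := by
  set r : ℝ := ((2 : ℝ) ^ q)⁻¹ with hr
  have h2q : (1 : ℝ) < 2 ^ q := one_lt_pow₀ one_lt_two hq.ne'
  have hr0 : 0 ≤ r := by positivity
  have hr1 : r < 1 := inv_lt_one_of_one_lt₀ h2q
  have hgeo : HasSum (fun m : ℕ => r ^ m * r) ((1 - r)⁻¹ * r) :=
    (hasSum_geometric_of_lt_one hr0 hr1).mul_right r
  set i : ℕ → ℕ := fun m => q * (m + 1) with hi
  have hinj : Function.Injective i := by
    intro a b hab
    simp only [hi] at hab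
    exact Nat.succ_injective (Nat.eq_of_mul_eq_mul_left hq hab)
  have hzero : ∀ x ∉ Set.range i,
      (if x ≠ 0 ∧ q ∣ x then (1 : ℝ) / 2 ^ x else 0) = 0 := by
    intro x hx
    rw [if_neg]
    rintro ⟨hx0, j, rfl⟩
    have hj : j ≠ 0 := fun h => hx0 (by simp [h])
    exact hx ⟨j - 1, by simp only [hi]; rw [Nat.sub_add_cancel (Nat.one_le_iff_ne_zero.mpr hj)]⟩
  have hcomp : ∀ m : ℕ,
      ((fun k : ℕ => if k ≠ 0 ∧ q ∣ k then (1 : ℝ) / 2 ^ k else 0) ∘ i) m = r ^ m * r := by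
    intro m
    have : i m ≠ 0 ∧ q ∣ i m := by
      constructor
      · simp only [hi]; positivity
      · exact Dvd.intro _ rfl
    simp only [Function.comp, if_pos this, hi, hr]
    rw [← pow_succ, ← inv_pow, ← pow_mul, one_div, inv_pow]
    exact if_pos this
  have := (hinj.hasSum_iff hzero).mp (hgeo.congr_fun hcomp)
  convert this using 1
  have h1 : (2 : ℝ) ^ q ≠ 0 := by positivity
  have h2 : (2 : ℝ) ^ q - 1 ≠ 0 := by linarith
  have h3 : (2 ^ q - 1) * r = 1 - r := by rw [hr, sub_mul, mul_inv_cancel₀ h1, one_mul]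
  rw [eq_comm, inv_mul_eq_div, div_eq_div_iff (sub_ne_zero.mpr hr1.ne') h2, one_mul, ← h3, mul_comm]

private lemma ds_int_iff {r q : ℕ} (hq : 0 < q) (hrq : Nat.Coprime r q) {k : ℕ}
    (hk : k ≠ 0) : (∃ j : ℤ, (k : ℝ) * ((r : ℝ) / q) = j) ↔ q ∣ k := by
  have hq' : (q : ℝ) ≠ 0 := Nat.cast_ne_zero.mpr hq.ne'
  constructor
  · rintro ⟨j, hj⟩
    have : ((k * r : ℕ) : ℝ) = ((j * q : ℤ) : ℝ) := by
      push_cast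
      field_simp at hj
      linarith [hj]
    have hint : (k * r : ℤ) = j * q := by exact_mod_cast this
    have hdvd : q ∣ k * r := by
      have : (q : ℤ) ∣ (k * r : ℕ) := ⟨j, by push_cast; linarith [hint]⟩
      exact_mod_cast this
    exact (Nat.Coprime.dvd_of_dvd_mul_right hrq.symm) hdvd
  · rintro ⟨j, rfl⟩
    refine ⟨(j * r : ℕ), ?_⟩
    push_cast
    field_simp

/-- At every rational point `x = r/q ∈ (0,1)` with `r, q` coprime positive integers, the
Devil's staircase function has a jump `f(x+0) - f(x-0) = 1/(2^q - 1)`, and it is continuous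
at every irrational point of `(0,1)`. -/
theorem devilStaircase_jump_and_continuity :
    (∀ r q : ℕ, 0 < r → 0 < q → Nat.Coprime r q → (r : ℝ) / q ∈ Set.Ioo (0 : ℝ) 1 →
      ∃ L R : ℝ,
        Tendsto devilStaircase (nhdsWithin ((r : ℝ) / q) (Set.Iio ((r : ℝ) / q))) (nhds L) ∧
        Tendsto devilStaircase (nhdsWithin ((r : ℝ) / q) (Set.Ioi ((r : ℝ) / q))) (nhds R) ∧
        R - L = 1 / (2 ^ q - 1)) ∧
    (∀ x : ℝ, x ∈ Set.Ioo (0 : ℝ) 1 → Irrational x → ContinuousAt devilStaircase x) := by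
  constructor
  · intro r q hr hq hrq hx
    set x : ℝ := (r : ℝ) / q with hxdef
    refine ⟨∑' k, dsLeftVal x k, ∑' k : ℕ, (⌊(k : ℝ) * x⌋ : ℝ) / 2 ^ k,
      ds_tendsto hx nhdsWithin_le_nhds _ (ds_left x),
      ds_tendsto hx nhdsWithin_le_nhds _ (ds_right x), ?_⟩
    rw [← Summable.tsum_sub (ds_summable_floor hx) (ds_summable_left hx)]
    have hterm : ∀ k : ℕ, (⌊(k : ℝ) * x⌋ : ℝ) / 2 ^ k - dsLeftVal x k =
        if k ≠ 0 ∧ q ∣ k then (1 : ℝ) / 2 ^ k else 0 := by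
      intro k
      rcases Nat.eq_zero_or_pos k with rfl | hk
      · simp [dsLeftVal]
      have hk0 : k ≠ 0 := hk.ne'
      rw [dsLeftVal, if_neg hk0]
      by_cases hdvd : q ∣ k
      · obtain ⟨j, hj⟩ := (ds_int_iff hq hrq hk0).mpr hdvd
        rw [hj, if_pos ⟨hk0, hdvd⟩, Int.floor_intCast, Int.ceil_intCast]
        ring
      · rw [if_neg (fun h => hdvd h.2)]
        have hnint : ¬∃ j : ℤ, (k : ℝ) * x = j := fun h => hdvd ((ds_int_iff hq hrq hk0).mp h)
        have hne : ((⌊(k : ℝ) * x⌋ : ℝ)) ≠ (k : ℝ) * x := fun h => hnint ⟨_, h.symm⟩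
        have hlt : ((⌊(k : ℝ) * x⌋ : ℝ)) < (k : ℝ) * x :=
          lt_of_le_of_ne (Int.floor_le _) hne
        have h1 : ⌈(k : ℝ) * x⌉ ≤ ⌊(k : ℝ) * x⌋ + 1 := Int.ceil_le_floor_add_one _
        have h2 : ⌊(k : ℝ) * x⌋ + 1 ≤ ⌈(k : ℝ) * x⌉ := by
          have : ((⌊(k : ℝ) * x⌋ : ℝ)) < (⌈(k : ℝ) * x⌉ : ℝ) :=
            lt_of_lt_of_le hlt (Int.le_ceil _)
          exact_mod_cast Int.add_one_le_of_lt (by exact_mod_cast this)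
        have hceil : ⌈(k : ℝ) * x⌉ = ⌊(k : ℝ) * x⌋ + 1 := le_antisymm h1 h2
        rw [hceil]
        push_cast
        ring
    rw [tsum_congr hterm, (ds_jump_sum q hq).tsum_eq]
  · intro x hx hirr
    exact ds_tendsto hx le_rfl _ (ds_nhds hirr)
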